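/- arXiv:2509.02551 — 2 statements merged into one kernel-verified Lean document; each statement's English description precedes it below -/
import Mathlib

section
/- Let d ≥ 1, M ≥ 1, ε ∈ [0,1), μ > 0, G ≥ 0. Let g ∈ ℝ^d with |g_j| ≤ G for all j, let α_1, …, α_M ≥ 0 with ∑_m α_m = 1, and for each modality m and coordinate j let ω'_{j}{}^{(m)} ≥ 0, Δ_j^{(m)} ∈ ℝ, and ω_j^{(m)} = ε·ω'_j{}^{(m)} + (1−ε)·(Δ_j^{(m)})². Then |∑_{j=1}^d g_j · ∑_{m=1}^M α_m · (Δ_j^{(m)}/(√(ω_j^{(m)}) + μ) − Δ_j^{(m)}/(√(ε·ω'_j{}^{(m)}) + μ))| ≤ √(1−ε)·G·∑_{j=1}^d ∑_{m=1}^M α_m · (Δ_j^{(m)})² / ((√(ω_j^{(m)}) + μ)·(√(ε·ω'_j{}^{(m)}) + μ)). -/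
open Real

/-- UTT descent analysis: bound on the inner-product term `⟨∇f(θ_t), A − B⟩`
between the gradient and the difference of the gated fusion updates with the
current and the ε-scaled previous second-moment estimates. -/
theorem utt_inner_product_A_minus_B_bound
    (d M : ℕ) (hd : 1 ≤ d) (hM : 1 ≤ M) (ε μ G : ℝ)
    (hε0 : 0 ≤ ε) (hε1 : ε < 1) (hμ : 0 < μ) (hG : 0 ≤ G)
    (g : Fin d → ℝ) (hg : ∀ j, |g j| ≤ G)
    (α : Fin M → ℝ) (hα : ∀ m, 0 ≤ α m) (hαsum : ∑ m, α m = 1)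
    (ω' Δ ω : Fin M → Fin d → ℝ)
    (hω' : ∀ m j, 0 ≤ ω' m j)
    (hω : ∀ m j, ω m j = ε * ω' m j + (1 - ε) * (Δ m j) ^ 2) :
    |∑ j, g j * ∑ m, α m *
        (Δ m j / (Real.sqrt (ω m j) + μ) -
          Δ m j / (Real.sqrt (ε * ω' m j) + μ))| ≤
      Real.sqrt (1 - ε) * G *
        ∑ j, ∑ m, α m * ((Δ m j) ^ 2 /
          ((Real.sqrt (ω m j) + μ) * (Real.sqrt (ε * ω' m j) + μ))) := by
  have h1ε : (0:ℝ) ≤ 1 - ε := by linarith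
  have key : ∀ m j, |Δ m j / (Real.sqrt (ω m j) + μ) - Δ m j / (Real.sqrt (ε * ω' m j) + μ)|
      ≤ Real.sqrt (1 - ε) * ((Δ m j) ^ 2 /
        ((Real.sqrt (ω m j) + μ) * (Real.sqrt (ε * ω' m j) + μ))) := by
    intro m j
    set a := Real.sqrt (ω m j) + μ with ha_def
    set b := Real.sqrt (ε * ω' m j) + μ with hb_def
    have ha : 0 < a := add_pos_of_nonneg_of_pos (Real.sqrt_nonneg _) hμ
    have hb : 0 < b := add_pos_of_nonneg_of_pos (Real.sqrt_nonneg _) hμ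
    have hdiff : Δ m j / a - Δ m j / b = Δ m j * (b - a) / (a * b) := by
      field_simp
    rw [hdiff, abs_div, abs_mul, abs_of_pos (mul_pos ha hb)]
    have hεω' : 0 ≤ ε * ω' m j := mul_nonneg hε0 (hω' m j)
    have hsle : Real.sqrt (ε * ω' m j) ≤ Real.sqrt (ω m j) := by
      apply Real.sqrt_le_sqrt
      rw [hω]
      nlinarith [sq_nonneg (Δ m j)]
    have h2 : Real.sqrt (ω m j) ≤ Real.sqrt (ε * ω' m j) + Real.sqrt (1 - ε) * |Δ m j| := by
      have h3 : Real.sqrt (ε * ω' m j + (1 - ε) * (Δ m j) ^ 2)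
          ≤ Real.sqrt (ε * ω' m j) + Real.sqrt ((1 - ε) * (Δ m j) ^ 2) := by
        have h4 : ε * ω' m j + (1 - ε) * (Δ m j) ^ 2 ≤
            (Real.sqrt (ε * ω' m j) + Real.sqrt ((1 - ε) * (Δ m j) ^ 2)) ^ 2 := by
          have e1 := Real.sq_sqrt hεω'
          have e2 := Real.sq_sqrt (mul_nonneg h1ε (sq_nonneg (Δ m j)))
          nlinarith [mul_nonneg (Real.sqrt_nonneg (ε * ω' m j))
            (Real.sqrt_nonneg ((1 - ε) * (Δ m j) ^ 2))]
        calc Real.sqrt (ε * ω' m j + (1 - ε) * (Δ m j) ^ 2)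
            ≤ Real.sqrt ((Real.sqrt (ε * ω' m j) + Real.sqrt ((1 - ε) * (Δ m j) ^ 2)) ^ 2) :=
              Real.sqrt_le_sqrt h4
          _ = _ := Real.sqrt_sq (by positivity)
      rw [hω]
      calc Real.sqrt (ε * ω' m j + (1 - ε) * (Δ m j) ^ 2)
          ≤ Real.sqrt (ε * ω' m j) + Real.sqrt ((1 - ε) * (Δ m j) ^ 2) := h3
        _ = Real.sqrt (ε * ω' m j) + Real.sqrt (1 - ε) * |Δ m j| := by
            rw [Real.sqrt_mul h1ε, Real.sqrt_sq_eq_abs]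
    have hba : |b - a| ≤ Real.sqrt (1 - ε) * |Δ m j| := by
      rw [ha_def, hb_def, abs_sub_comm]
      rw [abs_of_nonneg (by linarith)]
      linarith
    calc |Δ m j| * |b - a| / (a * b)
        ≤ |Δ m j| * (Real.sqrt (1 - ε) * |Δ m j|) / (a * b) := by
          gcongr
      _ = Real.sqrt (1 - ε) * ((Δ m j) ^ 2 / (a * b)) := by
          rw [← sq_abs]; ring
  have hdenpos : ∀ m j, 0 < (Real.sqrt (ω m j) + μ) * (Real.sqrt (ε * ω' m j) + μ) :=
    fun m j => mul_pos (add_pos_of_nonneg_of_pos (Real.sqrt_nonneg _) hμ)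
      (add_pos_of_nonneg_of_pos (Real.sqrt_nonneg _) hμ)
  calc |∑ j, g j * ∑ m, α m *
        (Δ m j / (Real.sqrt (ω m j) + μ) - Δ m j / (Real.sqrt (ε * ω' m j) + μ))|
      ≤ ∑ j, |g j * ∑ m, α m *
        (Δ m j / (Real.sqrt (ω m j) + μ) - Δ m j / (Real.sqrt (ε * ω' m j) + μ))| :=
        Finset.abs_sum_le_sum_abs _ _
    _ ≤ ∑ j, G * ∑ m, α m * (Real.sqrt (1 - ε) * ((Δ m j) ^ 2 /
          ((Real.sqrt (ω m j) + μ) * (Real.sqrt (ε * ω' m j) + μ)))) := by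
        apply Finset.sum_le_sum
        intro j _
        rw [abs_mul]
        apply mul_le_mul (hg j) ?_ (abs_nonneg _) hG
        calc |∑ m, α m * (Δ m j / (Real.sqrt (ω m j) + μ) -
                Δ m j / (Real.sqrt (ε * ω' m j) + μ))|
            ≤ ∑ m, |α m * (Δ m j / (Real.sqrt (ω m j) + μ) -
                Δ m j / (Real.sqrt (ε * ω' m j) + μ))| := Finset.abs_sum_le_sum_abs _ _
          _ ≤ ∑ m, α m * (Real.sqrt (1 - ε) * ((Δ m j) ^ 2 /
                ((Real.sqrt (ω m j) + μ) * (Real.sqrt (ε * ω' m j) + μ)))) := by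
              apply Finset.sum_le_sum
              intro m _
              rw [abs_mul, abs_of_nonneg (hα m)]
              exact mul_le_mul_of_nonneg_left (key m j) (hα m)
    _ = Real.sqrt (1 - ε) * G * ∑ j, ∑ m, α m * ((Δ m j) ^ 2 /
          ((Real.sqrt (ω m j) + μ) * (Real.sqrt (ε * ω' m j) + μ))) := by
        rw [Finset.mul_sum]
        apply Finset.sum_congr rfl
        intro j _
        rw [Finset.mul_sum, Finset.mul_sum]
        apply Finset.sum_congr rfl
        intro m _
        ring
end

section
/- Let d ≥ 1, N ≥ 1, let f : ℝ^d → ℝ be differentiable and bounded below by f*, let x_0, x_1, …, x_N ∈ ℝ^d, and let constants η > 0, η_l > 0, β ≥ 1, ε ∈ [0,1], μ > 0, G ≥ 0, E ≥ 0 be given with K = η_l·β·G. Suppose for each round t < N there is ω_t ∈ ℝ^d with 0 ≤ ω_{t,j} ≤ K² for all j, and the per-round descent inequality f(x_{t+1}) ≤ f(x_t) − (η·η_l·β/8)·∑_{j=1}^d [∇f(x_t)]_j² / (√(ε·ω_{t,j}) + μ) + E holds. Then min_{0 ≤ t ≤ N−1} ‖∇f(x_t)‖² ≤ (8·(√ε·η_l·β·G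 + μ) / (η·η_l·β·N)) · (f(x_0) − f* + N·E). -/
open Real

/-- UTT convergence assembly: telescoping the per-round descent inequality with
negative drift `−(η·η_l·β/8)·C_t` and per-round error `E` yields the stated
bound on the minimum squared gradient norm. -/
theorem utt_convergence_assembly
    (d N : ℕ) (hd : 1 ≤ d) (hN : 1 ≤ N)
    (f : EuclideanSpace ℝ (Fin d) → ℝ) (hf : Differentiable ℝ f)
    (fstar : ℝ) (hbdd : ∀ y, fstar ≤ f y)
    (x : ℕ → EuclideanSpace ℝ (Fin d))
    (η ηl : ℝ) (β : ℕ) (ε μ G E : ℝ)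
    (hη : 0 < η) (hηl : 0 < ηl) (hβ : 1 ≤ β)
    (hε0 : 0 ≤ ε) (hε1 : ε ≤ 1) (hμ : 0 < μ) (hG : 0 ≤ G) (hE : 0 ≤ E)
    (K : ℝ) (hK : K = ηl * (β : ℝ) * G)
    (ω : ℕ → Fin d → ℝ)
    (hω : ∀ t < N, ∀ j, 0 ≤ ω t j ∧ ω t j ≤ K ^ 2)
    (hdescent : ∀ t < N,
      f (x (t + 1)) ≤ f (x t) -
        (η * ηl * (β : ℝ) / 8) *
          ∑ j, (gradient f (x t) j) ^ 2 / (Real.sqrt (ε * ω t j) + μ) + E) :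
    (Finset.range N).inf' (Finset.nonempty_range_iff.mpr (by omega))
        (fun t => ‖gradient f (x t)‖ ^ 2) ≤
      (8 * (Real.sqrt ε * ηl * (β : ℝ) * G + μ) / (η * ηl * (β : ℝ) * N)) *
        (f (x 0) - fstar + (N : ℝ) * E) := by
  set C : ℕ → ℝ := fun t => ∑ j, (gradient f (x t) j) ^ 2 / (Real.sqrt (ε * ω t j) + μ)
    with hC
  set c : ℝ := η * ηl * (β : ℝ) / 8 with hc
  have hβ0 : (0:ℝ) < (β : ℝ) := by exact_mod_cast Nat.lt_of_lt_of_le Nat.zero_lt_one hβ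
  have hc0 : 0 < c := by positivity
  have hK0 : 0 ≤ K := by rw [hK]; positivity
  set D : ℝ := Real.sqrt ε * ηl * (β : ℝ) * G + μ with hD
  have hD0 : 0 < D := by
    have : 0 ≤ Real.sqrt ε * ηl * (β : ℝ) * G := by positivity
    linarith
  set m : ℝ := (Finset.range N).inf' (Finset.nonempty_range_iff.mpr (by omega))
        (fun t => ‖gradient f (x t)‖ ^ 2) with hm
  -- telescoping
  have htel : ∀ n ≤ N, f (x n) ≤ f (x 0) - c * ∑ t ∈ Finset.range n, C t + n * E := by
    intro n hn
    induction n with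
    | zero => simp
    | succ k ih =>
      have hk : k < N := by omega
      have ihk := ih (le_of_lt hk)
      have hd := hdescent k hk
      rw [Finset.sum_range_succ]
      push_cast
      nlinarith [hd, ihk]
  -- each C t ≥ m / D
  have hCt : ∀ t < N, m / D ≤ C t := by
    intro t ht
    have hmt : m ≤ ‖gradient f (x t)‖ ^ 2 :=
      Finset.inf'_le _ (Finset.mem_range.mpr ht)
    have hnorm : ‖gradient f (x t)‖ ^ 2 = ∑ j, (gradient f (x t) j) ^ 2 := by
      rw [EuclideanSpace.norm_eq, Real.sq_sqrt (by positivity)]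
      simp [Real.norm_eq_abs, sq_abs]
    have hsum : ‖gradient f (x t)‖ ^ 2 / D ≤ C t := by
      rw [hnorm, Finset.sum_div]
      apply Finset.sum_le_sum
      intro j _
      obtain ⟨hω0, hωK⟩ := hω t ht j
      apply div_le_div_of_nonneg_left (by positivity) _ _
      · positivity
      · have h1 : Real.sqrt (ε * ω t j) ≤ Real.sqrt ε * K := by
          rw [Real.sqrt_mul hε0]
          apply mul_le_mul_of_nonneg_left _ (Real.sqrt_nonneg ε)
          calc Real.sqrt (ω t j) ≤ Real.sqrt (K ^ 2) := Real.sqrt_le_sqrt hωK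
            _ = K := by rw [Real.sqrt_sq hK0]
        have : Real.sqrt ε * K = Real.sqrt ε * ηl * (β:ℝ) * G := by rw [hK]; ring
        linarith
    calc m / D ≤ ‖gradient f (x t)‖ ^ 2 / D := by gcongr
      _ ≤ C t := hsum
  -- sum lower bound
  have hsumC : (N : ℝ) * (m / D) ≤ ∑ t ∈ Finset.range N, C t := by
    calc (N : ℝ) * (m / D) = ∑ _t ∈ Finset.range N, m / D := by
          rw [Finset.sum_const, Finset.card_range]; ring
      _ ≤ ∑ t ∈ Finset.range N, C t :=
          Finset.sum_le_sum fun t ht => hCt t (Finset.mem_range.mp ht)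
  have hNtel := htel N le_rfl
  have hfN : fstar ≤ f (x N) := hbdd _
  have key : c * ((N : ℝ) * (m / D)) ≤ f (x 0) - fstar + N * E := by
    have := mul_le_mul_of_nonneg_left hsumC hc0.le
    linarith
  -- conclude
  have hN0 : (0:ℝ) < (N:ℝ) := by exact_mod_cast hN
  rw [div_mul_eq_mul_div, le_div_iff₀ (by positivity)]
  calc m * (η * ηl * (β:ℝ) * (N:ℝ)) = (c * ((N:ℝ) * (m / D))) * (8 * D) := by
        field_simp [hc]; ring
    _ ≤ (f (x 0) - fstar + N * E) * (8 * D) := by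
        apply mul_le_mul_of_nonneg_right key (by positivity)
    _ = 8 * D * (f (x 0) - fstar + N * E) := by ring
end
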